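/- Let S be a symmetric generating set of a subgroup H of GL_n(F_q), let A ∈ H have degree k (rank(A − I) = k), and let B be conjugate to A in H. Then B = M A M⁻¹ for some M ∈ H that is a product of at most q^{2nk} elements of S. -/

import Mathlib

section Reach

variable {G : Type*} [Group G]

/-- Elements conjugate to `A` by words of length at most `m` in `S`. -/
def conjReach (S : Set G) (A : G) : ℕ → Set G
  | 0 => {A}
  | m + 1 => conjReach S A m ∪ ⋃ s ∈ S, (fun x => s * x * s⁻¹) '' conjReach S A m

lemma conjReach_subset_succ (S : Set G) (A : G) (m : ℕ) :
    conjReach S A m ⊆ conjReach S A (m + 1) := by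
  simp only [conjReach]
  exact Set.subset_union_left

lemma conjReach_mono (S : Set G) (A : G) {m m' : ℕ} (h : m ≤ m') :
    conjReach S A m ⊆ conjReach S A m' := by
  induction m' with
  | zero =>
    have : m = 0 := Nat.le_zero.mp h
    subst this; exact subset_rfl
  | succ m' ih =>
    rcases Nat.lt_or_ge m (m' + 1) with h' | h'
    · exact (ih (Nat.lt_succ_iff.mp h')).trans (conjReach_subset_succ S A m')
    · have : m = m' + 1 := le_antisymm h h'
      subst this; exact subset_rfl

lemma conjReach_spec (S : Set G) (A : G) :
    ∀ m, ∀ x ∈ conjReach S A m,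
      ∃ l : List G, l.length ≤ m ∧ (∀ g ∈ l, g ∈ S) ∧ x = l.prod * A * l.prod⁻¹
  | 0, x, hx => by
    simp only [conjReach, Set.mem_singleton_iff] at hx
    exact ⟨[], by simp, by simp, by simp [hx]⟩
  | m + 1, x, hx => by
    simp only [conjReach, Set.mem_union, Set.mem_iUnion, Set.mem_image] at hx
    rcases hx with hx | ⟨s, hs, y, hy, rfl⟩
    · obtain ⟨l, h1, h2, h3⟩ := conjReach_spec S A m x hx
      exact ⟨l, h1.trans (Nat.le_succ m), h2, h3⟩
    · obtain ⟨l, h1, h2, h3⟩ := conjReach_spec S A m y hy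
      refine ⟨s :: l, by simpa using h1, ?_, ?_⟩
      · intro g hg
        rcases List.mem_cons.mp hg with rfl | hg
        · exact hs
        · exact h2 g hg
      · rw [h3, List.prod_cons]
        group

lemma conjReach_stab (S : Set G) (A : G) {m : ℕ}
    (h : conjReach S A m = conjReach S A (m + 1)) :
    ∀ j, conjReach S A (m + j) = conjReach S A m := by
  intro j
  induction j with
  | zero => rfl
  | succ j ih =>
    have : conjReach S A (m + (j + 1)) =
        conjReach S A (m + j) ∪ ⋃ s ∈ S, (fun x => s * x * s⁻¹) '' conjReach S A (m + j) := by
      show conjReach S A ((m + j) + 1) = _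
      simp only [conjReach]
    rw [this, ih]
    have h1 : conjReach S A (m + 1) =
        conjReach S A m ∪ ⋃ s ∈ S, (fun x => s * x * s⁻¹) '' conjReach S A m := by
      simp only [conjReach]
    rw [← h1, ← h]

lemma conjReach_list (S : Set G) (A : G) {m : ℕ}
    (h : conjReach S A m = conjReach S A (m + 1)) :
    ∀ l : List G, (∀ g ∈ l, g ∈ S) → l.prod * A * l.prod⁻¹ ∈ conjReach S A m
  | [], _ => by
    have hA : A ∈ conjReach S A 0 := by simp [conjReach]
    simpa using conjReach_mono S A (Nat.zero_le m) hA
  | g :: t, hl => by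
    have ht := conjReach_list S A h t fun x hx => hl x (List.mem_cons_of_mem g hx)
    have hg : g ∈ S := hl g List.mem_cons_self
    have hmem : g * (t.prod * A * t.prod⁻¹) * g⁻¹ ∈ conjReach S A (m + 1) := by
      simp only [conjReach, Set.mem_union, Set.mem_iUnion, Set.mem_image]
      exact Or.inr ⟨g, hg, t.prod * A * t.prod⁻¹, ht, rfl⟩
    rw [← h] at hmem
    have heq : (g :: t).prod * A * ((g :: t).prod)⁻¹
        = g * (t.prod * A * t.prod⁻¹) * g⁻¹ := by
      rw [List.prod_cons]; group
    rw [heq]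
    exact hmem

lemma conjReach_growth [Finite G] (S : Set G) (A : G) :
    ∀ m, conjReach S A m = conjReach S A (m + 1) ∨ m + 1 ≤ (conjReach S A m).ncard
  | 0 => by
    right
    simp [conjReach]
  | m + 1 => by
    by_cases h0 : conjReach S A m = conjReach S A (m + 1)
    · left
      have e1 := conjReach_stab S A h0 1
      have e2 := conjReach_stab S A h0 2
      rw [show m + 1 + 1 = m + 2 from rfl]
      exact e1.trans e2.symm
    · right
      rcases conjReach_growth S A m with h1 | h1
      · exact absurd h1 h0
      · have hlt := Set.ncard_lt_ncard
          (ssubset_of_subset_of_ne (conjReach_subset_succ S A m) h0) (Set.toFinite _)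
        omega

end Reach

/-- A matrix of rank at most `k` factors through `F^k`. -/
lemma rank_factor {F : Type*} [Field F] {n k : ℕ} (M : Matrix (Fin n) (Fin n) F)
    (h : M.rank ≤ k) :
    ∃ (X : Matrix (Fin n) (Fin k) F) (Y : Matrix (Fin k) (Fin n) F), M = X * Y := by
  classical
  set f := Matrix.toLin' M with hf
  have hr : Module.finrank F (LinearMap.range f) ≤ k := by
    exact h
  let b := Module.finBasis F (LinearMap.range f)
  let s : Fin (Module.finrank F (LinearMap.range f)) → Fin k := Fin.castLE hr
  have hs : Function.Injective s := Fin.castLE_injective hr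
  let p : (Fin n → F) →ₗ[F] (Fin k → F) :=
    (Function.ExtendByZero.linearMap F s) ∘ₗ b.equivFun.toLinearMap ∘ₗ f.rangeRestrict
  let i : (Fin k → F) →ₗ[F] (Fin n → F) :=
    (LinearMap.range f).subtype ∘ₗ b.equivFun.symm.toLinearMap ∘ₗ LinearMap.funLeft F F s
  have hip : i ∘ₗ p = f := by
    apply LinearMap.ext
    intro x
    simp only [i, p, LinearMap.comp_apply, LinearEquiv.coe_coe,
      Function.ExtendByZero.linearMap_apply]
    have hcomp : ∀ v : Fin (Module.finrank F (LinearMap.range f)) → F,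
        LinearMap.funLeft F F s ((Function.ExtendByZero.linearMap F s) v) = v := by
      intro v
      funext j
      simp only [LinearMap.funLeft_apply, Function.ExtendByZero.linearMap_apply]
      exact hs.extend_apply _ _ j
    rw [hcomp, LinearEquiv.symm_apply_apply]
    rfl
  refine ⟨LinearMap.toMatrix' i, LinearMap.toMatrix' p, ?_⟩
  rw [← LinearMap.toMatrix'_comp, hip, hf]
  exact (LinearMap.toMatrix'_toLin' M).symm

/-- If S is a symmetric generating set of a subgroup H ≤ GL_n(F_q), A ∈ H has degree k,
and B is conjugate to A in H, then B = M A M⁻¹ for some M ∈ H that is a product of at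
most q^{2nk} elements of S. -/
theorem stmt9 (F : Type*) [Field F] [Fintype F] (n k : ℕ)
    (H : Subgroup (Matrix.GeneralLinearGroup (Fin n) F))
    (S : Set (Matrix.GeneralLinearGroup (Fin n) F))
    (hSH : S ⊆ H) (hsymm : S⁻¹ = S) (hgen : Subgroup.closure S = H)
    (A B : Matrix.GeneralLinearGroup (Fin n) F) (hA : A ∈ H) (hB : B ∈ H)
    (hk : ((A : Matrix (Fin n) (Fin n) F) - 1).rank = k)
    (hconj : ∃ C ∈ H, B = C * A * C⁻¹) :
    ∃ l : List (Matrix.GeneralLinearGroup (Fin n) F),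
      l.length ≤ Fintype.card F ^ (2 * n * k) ∧ (∀ g ∈ l, g ∈ S) ∧
      l.prod ∈ H ∧ B = l.prod * A * l.prod⁻¹ := by
  classical
  set N := Fintype.card F ^ (2 * n * k) with hN
  -- the conjugacy class of A in H
  set Cl : Set (Matrix.GeneralLinearGroup (Fin n) F) := {B' | ∃ C ∈ H, B' = C * A * C⁻¹} with hCl
  -- rank counting : the class has at most N elements
  have hClcard : Cl.ncard ≤ N := by
    set φ : Matrix.GeneralLinearGroup (Fin n) F → Matrix (Fin n) (Fin n) F := fun g => (g : Matrix (Fin n) (Fin n) F) - 1 with hφ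
    have hφinj : Function.Injective φ := by
      intro a b hab
      have : (a : Matrix (Fin n) (Fin n) F) = b := by
        have := sub_left_injective hab
        exact this
      exact Units.ext this
    have himg : φ '' Cl ⊆ {M : Matrix (Fin n) (Fin n) F | M.rank ≤ k} := by
      rintro _ ⟨B', ⟨C, hC, rfl⟩, rfl⟩
      have h1 : (C : Matrix (Fin n) (Fin n) F) * ((C⁻¹ : Matrix.GeneralLinearGroup (Fin n) F) : Matrix (Fin n) (Fin n) F) = 1 := by
        rw [← Units.val_mul, mul_inv_cancel, Units.val_one]
      have heq : φ (C * A * C⁻¹)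
          = (C : Matrix (Fin n) (Fin n) F) * ((A : Matrix (Fin n) (Fin n) F) - 1)
            * ((C⁻¹ : Matrix.GeneralLinearGroup (Fin n) F) : Matrix (Fin n) (Fin n) F) := by
        simp only [φ, Units.val_mul]
        rw [mul_sub, mul_one, sub_mul, h1]
      have hCu : IsUnit ((C : Matrix (Fin n) (Fin n) F)).det :=
        (Matrix.isUnit_iff_isUnit_det _).mp ⟨C, rfl⟩
      have hCiu : IsUnit (((C⁻¹ : Matrix.GeneralLinearGroup (Fin n) F) : Matrix (Fin n) (Fin n) F)).det :=
        (Matrix.isUnit_iff_isUnit_det _).mp ⟨C⁻¹, rfl⟩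
      have : (φ (C * A * C⁻¹)).rank = k := by
        rw [heq, Matrix.rank_mul_eq_left_of_isUnit_det _ _ hCiu,
          Matrix.rank_mul_eq_right_of_isUnit_det _ _ hCu, hk]
      simp [this]
    have hrk : {M : Matrix (Fin n) (Fin n) F | M.rank ≤ k}.ncard ≤ N := by
      set g : Matrix (Fin n) (Fin k) F × Matrix (Fin k) (Fin n) F → Matrix (Fin n) (Fin n) F :=
        fun p => p.1 * p.2 with hg
      have hsub : {M : Matrix (Fin n) (Fin n) F | M.rank ≤ k} ⊆ Set.range g := by
        intro M hM
        obtain ⟨X, Y, hXY⟩ := rank_factor M hM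
        exact ⟨(X, Y), hXY.symm⟩
      calc {M : Matrix (Fin n) (Fin n) F | M.rank ≤ k}.ncard
          ≤ (Set.range g).ncard := Set.ncard_le_ncard hsub (Set.toFinite _)
        _ ≤ (Set.univ : Set (Matrix (Fin n) (Fin k) F × Matrix (Fin k) (Fin n) F)).ncard := by
            rw [← Set.image_univ]
            exact Set.ncard_image_le (Set.toFinite _)
        _ = N := by
            rw [Set.ncard_univ, Nat.card_eq_fintype_card, Fintype.card_prod]
            have c1 : Fintype.card (Matrix (Fin n) (Fin k) F) = Fintype.card F ^ (k * n) := by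
              show Fintype.card (Fin n → Fin k → F) = _
              rw [Fintype.card_fun, Fintype.card_fun, Fintype.card_fin, Fintype.card_fin,
                ← pow_mul]
            have c2 : Fintype.card (Matrix (Fin k) (Fin n) F) = Fintype.card F ^ (n * k) := by
              show Fintype.card (Fin k → Fin n → F) = _
              rw [Fintype.card_fun, Fintype.card_fun, Fintype.card_fin, Fintype.card_fin,
                ← pow_mul]
            rw [c1, c2, ← pow_add, hN]
            congr 1
            ring
    calc Cl.ncard = (φ '' Cl).ncard := (Set.ncard_image_of_injective Cl hφinj).symm
      _ ≤ {M : Matrix (Fin n) (Fin n) F | M.rank ≤ k}.ncard :=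
          Set.ncard_le_ncard himg (Set.toFinite _)
      _ ≤ N := hrk
  -- reach N is inside the class
  have hreach_sub : conjReach S A N ⊆ Cl := by
    intro x hx
    obtain ⟨l, h1, h2, h3⟩ := conjReach_spec S A N x hx
    exact ⟨l.prod, H.list_prod_mem fun g hg => hSH (h2 g hg), h3⟩
  -- stabilization at step N
  have hfix : conjReach S A N = conjReach S A (N + 1) := by
    rcases conjReach_growth S A N with h | h
    · exact h
    · have := Set.ncard_le_ncard hreach_sub (Set.toFinite _)
      omega
  -- B lies in reach N
  obtain ⟨C, hC, hBeq⟩ := hconj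
  have hCcl : C ∈ Subgroup.closure S := hgen ▸ hC
  have hCsub : C ∈ Submonoid.closure S := by
    have h1 : C ∈ (Subgroup.closure S).toSubmonoid := hCcl
    rw [Subgroup.closure_toSubmonoid, hsymm, Set.union_self] at h1
    exact h1
  obtain ⟨l0, hl0, hl0prod⟩ := Submonoid.exists_list_of_mem_closure hCsub
  have hBmem : B ∈ conjReach S A N := by
    rw [hBeq, ← hl0prod]
    exact conjReach_list S A hfix l0 hl0
  obtain ⟨l, h1, h2, h3⟩ := conjReach_spec S A N B hBmem
  exact ⟨l, h1, h2, H.list_prod_mem fun g hg => hSH (h2 g hg), h3⟩
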